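/- For every real number q > 1 (in particular for every prime power q), with α(q) := ∏_{i≥1, i odd}(1 − q^{−i}) and π_sym(k) := α(q)/∏_{i=1}^{k}(q^i − 1), the following moment identities hold: Σ_{k=0}^{∞} π_sym(k) = 1, Σ_{k=0}^{∞} π_sym(k)·q^k = 2, and Σ_{k=0}^{∞} π_sym(k)·q^{2k} = 2 + 2q. Equivalently: Σ_{k=0}^{∞} 1/∏_{i=1}^{k}(q^i−1) = α(q)^{−1}, Σ_{k=0}^{∞} q^k/∏_{i=1}^{k}(q^i−1) = 2·α(q)^{−1}, and Σ_{k=0}^{∞} q^{2k}/∏_{i=1}^{k}(q^i−1) = (2+2q)·α(q)^{−1}. -/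

import Mathlib

noncomputable section

open Real Filter Finset

namespace Stmt18Aux

/-- partial products `∏_{i=1}^{k}(q^i − 1)` -/
def P (q : ℝ) (k : ℕ) : ℝ := ∏ i ∈ Finset.range k, (q ^ (i + 1) - 1)

/-- the generating sum `Σ_k x^k/P_k` -/
def F (q x : ℝ) : ℝ := ∑' k : ℕ, x ^ k / P q k

variable {q : ℝ}

lemma P_pos (hq : 1 < q) (k : ℕ) : 0 < P q k := by
  apply Finset.prod_pos
  intro i _
  have : 1 < q ^ (i + 1) := one_lt_pow₀ hq (by omega)
  linarith

lemma P_succ (q : ℝ) (k : ℕ) : P q (k + 1) = P q k * (q ^ (k + 1) - 1) :=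
  Finset.prod_range_succ _ _

lemma summable_F (hq : 1 < q) (x : ℝ) : Summable fun k : ℕ => x ^ k / P q k := by
  apply summable_of_ratio_norm_eventually_le (r := 1/2) (by norm_num)
  have htend : Tendsto (fun k : ℕ => q ^ k) atTop atTop :=
    tendsto_pow_atTop_atTop_of_one_lt hq
  filter_upwards [htend.eventually_ge_atTop (2 * |x| + 1)] with k hk
  have hq0 : (0:ℝ) < q := by linarith
  have hk1 : 2 * |x| + 1 ≤ q ^ (k + 1) := by
    calc 2 * |x| + 1 ≤ q ^ k := hk
    _ ≤ q ^ (k + 1) := pow_le_pow_right₀ (by linarith) (by omega)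
  have hxabs : (0:ℝ) ≤ |x| := abs_nonneg x
  have hd : (0:ℝ) < q ^ (k + 1) - 1 := by
    have : 1 < q ^ (k + 1) := one_lt_pow₀ hq (by omega)
    linarith
  have hPk : (0:ℝ) < P q k := P_pos hq k
  have hPk1 : (0:ℝ) < P q (k + 1) := P_pos hq (k + 1)
  rw [Real.norm_eq_abs, Real.norm_eq_abs, abs_div, abs_div, abs_of_pos hPk,
    abs_of_pos hPk1, abs_pow, abs_pow, P_succ]
  have heq : |x| ^ (k + 1) / (P q k * (q ^ (k + 1) - 1))
      = |x| / (q ^ (k + 1) - 1) * (|x| ^ k / P q k) := by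
    rw [pow_succ, div_mul_div_comm, mul_comm (q ^ (k + 1) - 1) (P q k),
      mul_comm (|x|) (|x| ^ k)]
  rw [heq]
  apply mul_le_mul_of_nonneg_right ?_ (div_nonneg (pow_nonneg hxabs k) hPk.le)
  rw [div_le_iff₀ hd]
  linarith

set_option maxHeartbeats 1000000 in
lemma funcEq (hq : 1 < q) (x : ℝ) : F q x = (1 + x / q) * F q (x / q) := by
  have hq0 : (0:ℝ) < q := by linarith
  have hqne : q ≠ 0 := hq0.ne'
  have hs1 : Summable fun k : ℕ => x ^ (k + 1) / P q (k + 1) :=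
    (summable_nat_add_iff (f := fun k : ℕ => x ^ k / P q k) 1).2 (summable_F hq x)
  have hs2 : Summable fun k : ℕ => (x / q) ^ (k + 1) / P q (k + 1) :=
    (summable_nat_add_iff (f := fun k : ℕ => (x / q) ^ k / P q k) 1).2 (summable_F hq (x / q))
  have hs3 : Summable fun k : ℕ => x / q * ((x / q) ^ k / P q k) :=
    (summable_F hq (x / q)).mul_left _
  have key : ∀ k : ℕ, x ^ (k + 1) / P q (k + 1)
      = (x / q) ^ (k + 1) / P q (k + 1) + x / q * ((x / q) ^ k / P q k) := by
    intro k
    have hPk : P q k ≠ 0 := (P_pos hq k).ne'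
    have hd : q ^ (k + 1) - 1 ≠ 0 := by
      have : 1 < q ^ (k + 1) := one_lt_pow₀ hq (by omega)
      linarith
    rw [P_succ, div_pow, div_pow]
    field_simp
    ring
  have e0 : x ^ 0 / P q 0 = 1 := by simp [P]
  have e0' : (x / q) ^ 0 / P q 0 = 1 := by simp [P]
  unfold F
  rw [tsum_eq_zero_add' (f := fun k : ℕ => x ^ k / P q k) hs1, e0, tsum_congr key,
    Summable.tsum_add hs2 hs3, tsum_mul_left,
    tsum_eq_zero_add' (f := fun k : ℕ => (x / q) ^ k / P q k) hs2, e0']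
  ring

lemma hasProd_exp_log {f : ℕ → ℝ} (hpos : ∀ i, 0 < f i)
    (hs : Summable fun i => Real.log (f i)) :
    HasProd f (Real.exp (∑' i, Real.log (f i))) := by
  have h := hs.hasSum.rexp
  have heq : (Real.exp ∘ fun i => Real.log (f i)) = f := by
    funext i; simp [Real.exp_log (hpos i)]
  rwa [heq] at h

lemma summable_log_one_sub {t : ℝ} (ht0 : 0 < t) (ht1 : t < 1)
    (e : ℕ → ℕ) (he : ∀ i, i + 1 ≤ e i) :
    Summable fun i => Real.log (1 - t ^ e i) := by
  have hb : Summable fun i : ℕ => (1 - t)⁻¹ * t ^ (i + 1) := by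
    apply Summable.mul_left
    exact (summable_nat_add_iff (f := fun n : ℕ => t ^ n) 1).2 (summable_geometric_of_lt_one ht0.le ht1)
  apply Summable.of_norm_bounded hb
  intro i
  have hte : t ^ e i ≤ t ^ (i + 1) :=
    pow_le_pow_of_le_one ht0.le ht1.le (he i)
  have ht1' : t ^ (i + 1) ≤ t := by
    calc t ^ (i + 1) ≤ t ^ 1 := pow_le_pow_of_le_one ht0.le ht1.le (by omega)
    _ = t := pow_one t
  have htep : 0 < t ^ e i := pow_pos ht0 _
  have hy : 0 < 1 - t ^ e i := by nlinarith
  have hlogle : -Real.log (1 - t ^ e i) ≤ (1 - t ^ e i)⁻¹ - 1 := by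
    rw [← Real.log_inv]
    exact Real.log_le_sub_one_of_pos (by positivity)
  have hyt : 1 - t ≤ 1 - t ^ e i := by nlinarith
  have h1t : (0:ℝ) < 1 - t := by linarith
  have hinv : (1 - t ^ e i)⁻¹ ≤ (1 - t)⁻¹ := inv_anti₀ h1t hyt
  have hlogneg : Real.log (1 - t ^ e i) ≤ 0 :=
    Real.log_nonpos hy.le (by nlinarith)
  rw [Real.norm_eq_abs, abs_of_nonpos hlogneg]
  have heq2 : (1 - t ^ e i)⁻¹ - 1 = t ^ e i * (1 - t ^ e i)⁻¹ := by
    field_simp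
    ring
  calc -Real.log (1 - t ^ e i) ≤ (1 - t ^ e i)⁻¹ - 1 := hlogle
  _ = t ^ e i * (1 - t ^ e i)⁻¹ := heq2
  _ ≤ t ^ (i + 1) * (1 - t)⁻¹ := by
      apply mul_le_mul hte hinv (by positivity) (by positivity)
  _ = (1 - t)⁻¹ * t ^ (i + 1) := by ring

lemma summable_log_one_add {t : ℝ} (ht0 : 0 < t) (ht1 : t < 1) :
    Summable fun i => Real.log (1 + t ^ (i + 1)) := by
  have hb : Summable fun i : ℕ => t ^ (i + 1) :=
    (summable_nat_add_iff (f := fun n : ℕ => t ^ n) 1).2 (summable_geometric_of_lt_one ht0.le ht1)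
  apply Summable.of_norm_bounded hb
  intro i
  have htep : 0 < t ^ (i + 1) := pow_pos ht0 _
  have h1 : Real.log (1 + t ^ (i + 1)) ≤ t ^ (i + 1) := by
    have := Real.log_le_sub_one_of_pos (x := 1 + t ^ (i + 1)) (by linarith)
    linarith
  have h2 : 0 ≤ Real.log (1 + t ^ (i + 1)) :=
    Real.log_nonneg (by linarith)
  rw [Real.norm_eq_abs, abs_of_nonneg h2]
  exact h1

end Stmt18Aux

open Stmt18Aux

/-- `α(q) = ∏_{i ≥ 1, i odd} (1 − q^{-i})`. -/
def alphaQ (q : ℝ) : ℝ := ∏' i : ℕ, (1 - q⁻¹ ^ (2 * i + 1))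

/-- The stationary distribution `π_sym(k) = α(q)/∏_{i=1}^{k}(q^i − 1)`. -/
def piSym (q : ℝ) (k : ℕ) : ℝ := alphaQ q / ∏ i ∈ Finset.range k, (q ^ (i + 1) - 1)

set_option maxHeartbeats 2000000 in
/-- Moment identities for `π_sym`: `Σ_k π_sym(k) = 1`,
`Σ_k π_sym(k)·q^k = 2`, `Σ_k π_sym(k)·q^{2k} = 2 + 2q`; equivalently
`Σ_k 1/∏_{i=1}^{k}(q^i−1) = α(q)⁻¹`, `Σ_k q^k/∏_{i=1}^{k}(q^i−1) = 2α(q)⁻¹`,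
`Σ_k q^{2k}/∏_{i=1}^{k}(q^i−1) = (2+2q)·α(q)⁻¹`. -/
theorem stmt18 (q : ℝ) (hq : 1 < q) :
    (∑' k : ℕ, piSym q k) = 1 ∧
    (∑' k : ℕ, piSym q k * q ^ k) = 2 ∧
    (∑' k : ℕ, piSym q k * q ^ (2 * k)) = 2 + 2 * q ∧
    (∑' k : ℕ, 1 / ∏ i ∈ Finset.range k, (q ^ (i + 1) - 1)) = (alphaQ q)⁻¹ ∧
    (∑' k : ℕ, q ^ k / ∏ i ∈ Finset.range k, (q ^ (i + 1) - 1)) = 2 * (alphaQ q)⁻¹ ∧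
    (∑' k : ℕ, q ^ (2 * k) / ∏ i ∈ Finset.range k, (q ^ (i + 1) - 1))
      = (2 + 2 * q) * (alphaQ q)⁻¹ := by
  have hq0 : (0:ℝ) < q := by linarith
  set t : ℝ := q⁻¹ with ht_def
  have ht0 : 0 < t := inv_pos.2 hq0
  have ht1 : t < 1 := inv_lt_one_of_one_lt₀ hq
  set SO : ℝ := ∑' i : ℕ, Real.log (1 - t ^ (2 * i + 1)) with hSO_def
  set SE : ℝ := ∑' i : ℕ, Real.log (1 - t ^ (2 * i + 2)) with hSE_def
  set SD : ℝ := ∑' i : ℕ, Real.log (1 - t ^ (i + 1)) with hSD_def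
  set SA : ℝ := ∑' i : ℕ, Real.log (1 + t ^ (i + 1)) with hSA_def
  have hsO : Summable fun i : ℕ => Real.log (1 - t ^ (2 * i + 1)) :=
    summable_log_one_sub ht0 ht1 _ (fun i => by omega)
  have hsE : Summable fun i : ℕ => Real.log (1 - t ^ (2 * i + 2)) :=
    summable_log_one_sub ht0 ht1 _ (fun i => by omega)
  have hsD : Summable fun i : ℕ => Real.log (1 - t ^ (i + 1)) :=
    summable_log_one_sub ht0 ht1 _ (fun i => by omega)
  have hsA : Summable fun i : ℕ => Real.log (1 + t ^ (i + 1)) :=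
    summable_log_one_add ht0 ht1
  have htpow_lt : ∀ m : ℕ, 1 ≤ m → t ^ m < 1 := fun m hm =>
    pow_lt_one₀ ht0.le ht1 (by omega)
  have halpha : alphaQ q = Real.exp SO := by
    have hpos : ∀ i : ℕ, 0 < 1 - t ^ (2 * i + 1) := fun i => by
      have := htpow_lt (2 * i + 1) (by omega); linarith
    rw [alphaQ, ← ht_def]
    exact (hasProd_exp_log hpos hsO).tprod_eq
  have halpha_pos : 0 < alphaQ q := halpha ▸ Real.exp_pos SO
  have hEO : SO + SE = SD := by
    have h2 : SE = ∑' k : ℕ, Real.log (1 - t ^ (2 * k + 1 + 1)) := by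
      apply tsum_congr; intro k; norm_num
    rw [hSO_def, h2, hSD_def]
    exact tsum_even_add_odd (f := fun k => Real.log (1 - t ^ (k + 1))) hsO hsE
  have hAD : SA + SD = SE := by
    rw [hSA_def, hSD_def, hSE_def, ← Summable.tsum_add hsA hsD]
    apply tsum_congr
    intro i
    have hp : (0:ℝ) < 1 + t ^ (i + 1) := by positivity
    have hm : (0:ℝ) < 1 - t ^ (i + 1) := by
      have := htpow_lt (i + 1) (by omega); linarith
    rw [← Real.log_mul hp.ne' hm.ne']
    congr 1
    have hpp : t ^ (2 * i + 2) = t ^ (i + 1) * t ^ (i + 1) := by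
      rw [← pow_add]; congr 1; omega
    rw [hpp]; ring
  have hSA_eq : SA = -SO := by linarith
  have hprodA : HasProd (fun i : ℕ => 1 + t ^ (i + 1)) (Real.exp SA) :=
    hasProd_exp_log (fun i => by positivity) hsA
  have htendA : Tendsto (fun n : ℕ => ∏ i ∈ Finset.range n, (1 + t ^ (i + 1)))
      atTop (nhds (Real.exp SA)) := hprodA.tendsto_prod_nat
  have hkey : ∀ n : ℕ, F q 1 = (∏ i ∈ Finset.range n, (1 + t ^ (i + 1))) * F q (t ^ n) := by
    intro n
    induction n with
    | zero => simp
    | succ n ih =>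
      rw [Finset.prod_range_succ, ih, funcEq hq (t ^ n)]
      have h1 : t ^ n / q = t ^ (n + 1) := by
        rw [div_eq_mul_inv, ← ht_def, pow_succ]
      rw [h1]
      ring
  have hC : Summable fun k : ℕ => (1:ℝ) ^ (k + 1) / P q (k + 1) :=
    (summable_nat_add_iff (f := fun k : ℕ => (1:ℝ) ^ k / P q k) 1).2 (summable_F hq 1)
  set C : ℝ := ∑' k : ℕ, (1:ℝ) ^ (k + 1) / P q (k + 1) with hC_def
  have hFt : ∀ n : ℕ, F q (t ^ n) = 1 + ∑' k : ℕ, (t ^ n) ^ (k + 1) / P q (k + 1) := by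
    intro n
    unfold F
    rw [tsum_eq_zero_add' (f := fun k : ℕ => (t ^ n) ^ k / P q k)
      ((summable_nat_add_iff (f := fun k : ℕ => (t ^ n) ^ k / P q k) 1).2 (summable_F hq (t ^ n)))]
    simp [P]
  have hg_bound : ∀ n : ℕ, ‖∑' k : ℕ, (t ^ n) ^ (k + 1) / P q (k + 1)‖ ≤ C * t ^ n := by
    intro n
    have hsn : Summable fun k : ℕ => (t ^ n) ^ (k + 1) / P q (k + 1) :=
      (summable_nat_add_iff (f := fun k : ℕ => (t ^ n) ^ k / P q k) 1).2 (summable_F hq (t ^ n))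
    have hnn : ∀ k : ℕ, 0 ≤ (t ^ n) ^ (k + 1) / P q (k + 1) := fun k =>
      div_nonneg (by positivity) (P_pos hq (k + 1)).le
    rw [Real.norm_eq_abs, abs_of_nonneg (tsum_nonneg hnn)]
    have hle : ∀ k : ℕ, (t ^ n) ^ (k + 1) / P q (k + 1)
        ≤ t ^ n * ((1:ℝ) ^ (k + 1) / P q (k + 1)) := by
      intro k
      have hP := P_pos hq (k + 1)
      have hpow : (t ^ n) ^ (k + 1) ≤ t ^ n := by
        rw [← pow_mul]
        exact pow_le_pow_of_le_one ht0.le ht1.le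
          (le_mul_of_one_le_right (Nat.zero_le n) (by omega))
      rw [one_pow, mul_one_div]
      rw [div_eq_mul_inv, div_eq_mul_inv]
      exact mul_le_mul_of_nonneg_right hpow (inv_nonneg.2 hP.le)
    calc (∑' k : ℕ, (t ^ n) ^ (k + 1) / P q (k + 1))
        ≤ ∑' k : ℕ, t ^ n * ((1:ℝ) ^ (k + 1) / P q (k + 1)) :=
          Summable.tsum_le_tsum hle hsn (hC.mul_left _)
    _ = t ^ n * C := tsum_mul_left
    _ = C * t ^ n := mul_comm _ _
  have hg0 : Tendsto (fun n : ℕ => ∑' k : ℕ, (t ^ n) ^ (k + 1) / P q (k + 1))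
      atTop (nhds 0) := by
    apply squeeze_zero_norm hg_bound
    have h := (tendsto_pow_atTop_nhds_zero_of_lt_one ht0.le ht1).const_mul C
    simpa using h
  have hFtend : Tendsto (fun n : ℕ => F q (t ^ n)) atTop (nhds 1) := by
    have heq : (fun n : ℕ => F q (t ^ n))
        = fun n : ℕ => 1 + ∑' k : ℕ, (t ^ n) ^ (k + 1) / P q (k + 1) := funext hFt
    rw [heq]
    simpa using (tendsto_const_nhds (x := (1:ℝ)) (f := atTop)).add hg0
  have hF1 : F q 1 = Real.exp SA := by
    have h2 : Tendsto (fun n : ℕ => (∏ i ∈ Finset.range n, (1 + t ^ (i + 1))) * F q (t ^ n))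
        atTop (nhds (Real.exp SA * 1)) := htendA.mul hFtend
    have h3 : (fun n : ℕ => (∏ i ∈ Finset.range n, (1 + t ^ (i + 1))) * F q (t ^ n))
        = fun _ : ℕ => F q 1 := funext fun n => (hkey n).symm
    rw [h3] at h2
    simpa using (tendsto_nhds_unique h2 tendsto_const_nhds).symm
  have hF1' : F q 1 = (alphaQ q)⁻¹ := by
    rw [hF1, hSA_eq, Real.exp_neg, halpha]
  have hFq : F q q = 2 * F q 1 := by
    have h := funcEq hq q
    rw [div_self hq0.ne'] at h
    norm_num at h
    exact h
  have hFq2 : F q (q ^ 2) = (1 + q) * (2 * F q 1) := by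
    have h := funcEq hq (q ^ 2)
    rw [show q ^ 2 / q = q by rw [sq, mul_div_assoc, div_self hq0.ne', mul_one]] at h
    rw [hFq] at h
    exact h
  have hS4 : (∑' k : ℕ, 1 / ∏ i ∈ Finset.range k, (q ^ (i + 1) - 1)) = (alphaQ q)⁻¹ := by
    have heq : (∑' k : ℕ, 1 / ∏ i ∈ Finset.range k, (q ^ (i + 1) - 1)) = F q 1 := by
      unfold F P
      exact tsum_congr fun k => by norm_num
    rw [heq, hF1']
  have hS5 : (∑' k : ℕ, q ^ k / ∏ i ∈ Finset.range k, (q ^ (i + 1) - 1))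
      = 2 * (alphaQ q)⁻¹ := by
    rw [show (∑' k : ℕ, q ^ k / ∏ i ∈ Finset.range k, (q ^ (i + 1) - 1)) = F q q from rfl,
      hFq, hF1']
  have hS6 : (∑' k : ℕ, q ^ (2 * k) / ∏ i ∈ Finset.range k, (q ^ (i + 1) - 1))
      = (2 + 2 * q) * (alphaQ q)⁻¹ := by
    have heq : (∑' k : ℕ, q ^ (2 * k) / ∏ i ∈ Finset.range k, (q ^ (i + 1) - 1))
        = F q (q ^ 2) := by
      unfold F P
      exact tsum_congr fun k => by rw [pow_mul]
    rw [heq, hFq2, hF1']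
    ring
  refine ⟨?_, ?_, ?_, hS4, hS5, hS6⟩
  · have h1 : (∑' k : ℕ, piSym q k)
        = alphaQ q * ∑' k : ℕ, 1 / ∏ i ∈ Finset.range k, (q ^ (i + 1) - 1) := by
      rw [← tsum_mul_left]
      exact tsum_congr fun k => by simp only [piSym, mul_one_div]
    rw [h1, hS4, mul_inv_cancel₀ halpha_pos.ne']
  · have h1 : (∑' k : ℕ, piSym q k * q ^ k)
        = alphaQ q * ∑' k : ℕ, q ^ k / ∏ i ∈ Finset.range k, (q ^ (i + 1) - 1) := by
      rw [← tsum_mul_left]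
      exact tsum_congr fun k => by
        simp only [piSym, div_mul_eq_mul_div, mul_div_assoc]
    rw [h1, hS5, mul_comm (2:ℝ) _, ← mul_assoc, mul_inv_cancel₀ halpha_pos.ne', one_mul]
  · have h1 : (∑' k : ℕ, piSym q k * q ^ (2 * k))
        = alphaQ q * ∑' k : ℕ, q ^ (2 * k) / ∏ i ∈ Finset.range k, (q ^ (i + 1) - 1) := by
      rw [← tsum_mul_left]
      exact tsum_congr fun k => by
        simp only [piSym, div_mul_eq_mul_div, mul_div_assoc]
    rw [h1, hS6, mul_comm (2 + 2 * q) _, ← mul_assoc, mul_inv_cancel₀ halpha_pos.ne', one_mul]
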